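/- Let X and Y be nonnegative integrable random variables with E[X] = E[Y], and suppose X ≤_cx Y, i.e., E[φ(X)] ≤ E[φ(Y)] for every convex function φ : ℝ → ℝ for which both expectations exist and are finite. Then for every p ∈ (0,1), ∫₀ᵖ Q_X(u) du ≥ ∫₀ᵖ Q_Y(u) du, where Q_X(p) = inf{t ∈ ℝ : P(X ≤ t) ≥ p} denotes the left-continuous quantile function. -/

import Mathlib

open MeasureTheory ProbabilityTheory


section QuantileAux
open MeasureTheory ProbabilityTheory Set Filter
open scoped Topology

noncomputable def quantAux (μ : Measure ℝ) (u : ℝ) : ℝ := sInf {s | u ≤ cdf μ s}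

variable (μ : Measure ℝ) [IsProbabilityMeasure μ]

lemma quantAux_set_nonempty {u : ℝ} (hu : u < 1) : {s | u ≤ cdf μ s}.Nonempty := by
  obtain ⟨s, hs⟩ := ((tendsto_cdf_atTop μ).eventually (eventually_ge_nhds hu)).exists
  exact ⟨s, hs⟩

lemma quantAux_set_subset (h0 : μ (Iio 0) = 0) {u : ℝ} (hu : 0 < u) :
    {s | u ≤ cdf μ s} ⊆ Ici 0 := by
  intro s hs
  simp only [mem_setOf_eq, cdf_eq_real, measureReal_def] at hs
  by_contra h
  rw [mem_Ici, not_le] at h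
  have h1 : μ (Iic s) ≤ μ (Iio 0) := measure_mono (Iic_subset_Iio.2 h)
  rw [h0, le_zero_iff] at h1
  rw [h1, ENNReal.toReal_zero] at hs
  linarith

lemma quantAux_set_bddBelow (h0 : μ (Iio 0) = 0) {u : ℝ} (hu : 0 < u) :
    BddBelow {s | u ≤ cdf μ s} :=
  ⟨0, fun s hs => quantAux_set_subset μ h0 hu hs⟩

lemma quantAux_le_iff (h0 : μ (Iio 0) = 0) {u : ℝ} (hu : u ∈ Ioo (0:ℝ) 1) (t : ℝ) :
    quantAux μ u ≤ t ↔ u ≤ cdf μ t := by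
  constructor
  · intro h
    have hne := quantAux_set_nonempty μ hu.2
    refine ge_of_tendsto (((cdf μ).right_continuous t).tendsto.mono_left
      (nhdsWithin_mono _ Ioi_subset_Ici_self)) ?_
    filter_upwards [self_mem_nhdsWithin] with s hs
    obtain ⟨x, hxS, hxs⟩ := exists_lt_of_csInf_lt hne (lt_of_le_of_lt h hs)
    have hxS' : u ≤ cdf μ x := hxS
    exact hxS'.trans (monotone_cdf μ hxs.le)
  · intro h
    exact csInf_le (quantAux_set_bddBelow μ h0 hu.1) h

lemma quantAux_monoOn (h0 : μ (Iio 0) = 0) : MonotoneOn (quantAux μ) (Ioo (0:ℝ) 1) := by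
  intro u hu v hv huv
  have h2 : v ≤ cdf μ (quantAux μ v) := (quantAux_le_iff μ h0 hv _).mp le_rfl
  exact (quantAux_le_iff μ h0 hu _).mpr (huv.trans h2)

lemma quantAux_aemeasurable (h0 : μ (Iio 0) = 0) :
    AEMeasurable (quantAux μ) (volume.restrict (Ioo (0:ℝ) 1)) :=
  aemeasurable_restrict_of_monotoneOn measurableSet_Ioo (quantAux_monoOn μ h0)

lemma quantAux_map (h0 : μ (Iio 0) = 0) :
    Measure.map (quantAux μ) (volume.restrict (Ioo (0:ℝ) 1)) = μ := by
  have hQae := quantAux_aemeasurable μ h0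
  have hprob : IsProbabilityMeasure ((volume.restrict (Ioo (0:ℝ) 1)).map (quantAux μ)) := by
    constructor
    rw [Measure.map_apply_of_aemeasurable hQae MeasurableSet.univ]
    simp [Real.volume_Ioo]
  refine Measure.ext_of_Iic _ _ fun t => ?_
  rw [Measure.map_apply_of_aemeasurable hQae measurableSet_Iic,
    Measure.restrict_apply' measurableSet_Ioo]
  have hset : quantAux μ ⁻¹' Iic t ∩ Ioo 0 1 = Ioo (0:ℝ) 1 ∩ Iic (cdf μ t) := by
    ext u
    simp only [mem_inter_iff, mem_preimage, mem_Iic, mem_Ioo]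
    constructor
    · rintro ⟨h, hu1, hu2⟩
      exact ⟨⟨hu1, hu2⟩, (quantAux_le_iff μ h0 ⟨hu1, hu2⟩ t).mp h⟩
    · rintro ⟨⟨hu1, hu2⟩, h⟩
      exact ⟨(quantAux_le_iff μ h0 ⟨hu1, hu2⟩ t).mpr h, hu1, hu2⟩
  rw [hset, ← ofReal_cdf μ t]
  have hc0 : 0 ≤ cdf μ t := cdf_nonneg μ t
  rcases lt_or_eq_of_le (cdf_le_one μ t) with hc1 | hc1
  · have : Ioo (0:ℝ) 1 ∩ Iic (cdf μ t) = Ioc 0 (cdf μ t) := by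
      ext u
      simp only [mem_inter_iff, mem_Ioo, mem_Iic, mem_Ioc]
      exact ⟨fun ⟨⟨h1, _⟩, h3⟩ => ⟨h1, h3⟩, fun ⟨h1, h2⟩ => ⟨⟨h1, h2.trans_lt hc1⟩, h2⟩⟩
    rw [this, Real.volume_Ioc, sub_zero]
  · have : Ioo (0:ℝ) 1 ∩ Iic (cdf μ t) = Ioo 0 1 := by
      rw [inter_eq_left]
      intro u hu
      exact le_of_lt (hc1 ▸ hu.2)
    rw [this, Real.volume_Ioo, hc1]
    norm_num


section transfer
variable (μ : Measure ℝ) [IsProbabilityMeasure μ]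

lemma quantAux_integral (h0 : μ (Iio 0) = 0) (g : ℝ → ℝ) (hg : AEStronglyMeasurable g μ) :
    ∫ u in Ioo (0:ℝ) 1, g (quantAux μ u) = ∫ x, g x ∂μ := by
  have h := quantAux_map μ h0
  have hg' : AEStronglyMeasurable g
      (Measure.map (quantAux μ) (volume.restrict (Ioo (0:ℝ) 1))) := by rw [h]; exact hg
  conv_rhs => rw [← h]
  exact (integral_map (quantAux_aemeasurable μ h0) hg').symm

lemma quantAux_integrable (h0 : μ (Iio 0) = 0) (g : ℝ → ℝ) (hg : Integrable g μ) :
    IntegrableOn (fun u => g (quantAux μ u)) (Ioo (0:ℝ) 1) volume := by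
  have h := quantAux_map μ h0
  have hg' : Integrable g (Measure.map (quantAux μ) (volume.restrict (Ioo (0:ℝ) 1))) := by
    rw [h]; exact hg
  have h2 := (integrable_map_measure hg'.aestronglyMeasurable (quantAux_aemeasurable μ h0)).mp hg'
  exact h2

end transfer
end QuantileAux

open MeasureTheory ProbabilityTheory Set Filter in

/-- **Convex order implies Lorenz order** (Shaked–Shanthikumar, Theorem 3.A.10).
If `X, Y ≥ 0` are integrable with `E[X] = E[Y]` and `X ≤_cx Y`, then for every
`p ∈ (0,1)`, `∫₀ᵖ Q_X(u) du ≥ ∫₀ᵖ Q_Y(u) du`, where `Q_X(p) = inf {t | P(X ≤ t) ≥ p}`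
is the left-continuous quantile function. -/
theorem convex_order_implies_lorenz_order
    {Ω : Type*} [MeasurableSpace Ω] (P : Measure Ω) [IsProbabilityMeasure P]
    (X Y : Ω → ℝ)
    (hXnn : ∀ ω, 0 ≤ X ω) (hYnn : ∀ ω, 0 ≤ Y ω)
    (hXint : Integrable X P) (hYint : Integrable Y P)
    (hmean : ∫ ω, X ω ∂P = ∫ ω, Y ω ∂P)
    (hcx : ∀ φ : ℝ → ℝ, ConvexOn ℝ Set.univ φ →
      Integrable (fun ω => φ (X ω)) P → Integrable (fun ω => φ (Y ω)) P →
      ∫ ω, φ (X ω) ∂P ≤ ∫ ω, φ (Y ω) ∂P)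
    (QX QY : ℝ → ℝ)
    (hQX : QX = fun p => sInf {t : ℝ | p ≤ (P {ω | X ω ≤ t}).toReal})
    (hQY : QY = fun p => sInf {t : ℝ | p ≤ (P {ω | Y ω ≤ t}).toReal}) :
    ∀ p ∈ Set.Ioo (0 : ℝ) 1,
      ∫ u in (0 : ℝ)..p, QY u ≤ ∫ u in (0 : ℝ)..p, QX u := by
  obtain ⟨X₀, hX₀m, hX₀e⟩ := hXint.aestronglyMeasurable
  obtain ⟨Y₀, hY₀m, hY₀e⟩ := hYint.aestronglyMeasurable
  set X' : Ω → ℝ := fun ω => max (X₀ ω) 0 with hX'def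
  set Y' : Ω → ℝ := fun ω => max (Y₀ ω) 0 with hY'def
  have hX'm : Measurable X' := hX₀m.measurable.max measurable_const
  have hY'm : Measurable Y' := hY₀m.measurable.max measurable_const
  have hX'e : X =ᵐ[P] X' := hX₀e.mono fun ω h => by
    simp only [hX'def]; rw [← h, max_eq_left (hXnn ω)]
  have hY'e : Y =ᵐ[P] Y' := hY₀e.mono fun ω h => by
    simp only [hY'def]; rw [← h, max_eq_left (hYnn ω)]
  set μ := P.map X' with hμdef
  set ν := P.map Y' with hνdef
  have hμprob : IsProbabilityMeasure μ := Measure.isProbabilityMeasure_map hX'm.aemeasurable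
  have hνprob : IsProbabilityMeasure ν := Measure.isProbabilityMeasure_map hY'm.aemeasurable
  have hμ0 : μ (Iio 0) = 0 := by
    rw [hμdef, Measure.map_apply hX'm measurableSet_Iio]
    have he : X' ⁻¹' (Iio 0) = ∅ := by
      ext ω; simp [hX'def, not_lt, le_max_right]
    simp [he]
  have hν0 : ν (Iio 0) = 0 := by
    rw [hνdef, Measure.map_apply hY'm measurableSet_Iio]
    have he : Y' ⁻¹' (Iio 0) = ∅ := by
      ext ω; simp [hY'def, not_lt, le_max_right]
    simp [he]
  have hcdfX : ∀ t : ℝ, (P {ω | X ω ≤ t}).toReal = cdf μ t := by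
    intro t
    rw [cdf_eq_real, measureReal_def, hμdef, Measure.map_apply hX'm measurableSet_Iic]
    congr 1
    exact measure_congr (hX'e.mono fun ω h => by
      show (X ω ≤ t) = (X' ω ≤ t); rw [h])
  have hcdfY : ∀ t : ℝ, (P {ω | Y ω ≤ t}).toReal = cdf ν t := by
    intro t
    rw [cdf_eq_real, measureReal_def, hνdef, Measure.map_apply hY'm measurableSet_Iic]
    congr 1
    exact measure_congr (hY'e.mono fun ω h => by
      show (Y ω ≤ t) = (Y' ω ≤ t); rw [h])
  have hQXq : QX = quantAux μ := by
    rw [hQX]; funext q; simp only [quantAux, hcdfX]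
  have hQYq : QY = quantAux ν := by
    rw [hQY]; funext q; simp only [quantAux, hcdfY]
  -- integrability and integrals of quantile functions
  have hXint' : Integrable X' P := hXint.congr hX'e
  have hYint' : Integrable Y' P := hYint.congr hY'e
  have hidμ : Integrable (fun x : ℝ => x) μ := by
    rw [hμdef]
    exact (integrable_map_measure aestronglyMeasurable_id hX'm.aemeasurable).mpr hXint'
  have hidν : Integrable (fun x : ℝ => x) ν := by
    rw [hνdef]
    exact (integrable_map_measure aestronglyMeasurable_id hY'm.aemeasurable).mpr hYint'
  have hEX : ∫ x, x ∂μ = ∫ ω, X ω ∂P := by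
    rw [hμdef, integral_map (f := fun x : ℝ => x) hX'm.aemeasurable aestronglyMeasurable_id]
    exact (integral_congr_ae hX'e).symm
  have hEY : ∫ x, x ∂ν = ∫ ω, Y ω ∂P := by
    rw [hνdef, integral_map (f := fun x : ℝ => x) hY'm.aemeasurable aestronglyMeasurable_id]
    exact (integral_congr_ae hY'e).symm
  have hIQX : IntegrableOn QX (Ioo (0:ℝ) 1) volume := by
    rw [hQXq]; exact quantAux_integrable μ hμ0 (fun x => x) hidμ
  have hIQY : IntegrableOn QY (Ioo (0:ℝ) 1) volume := by
    rw [hQYq]; exact quantAux_integrable ν hν0 (fun x => x) hidν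
  have hQXtot : ∫ u in Ioo (0:ℝ) 1, QX u = ∫ ω, X ω ∂P := by
    rw [hQXq, quantAux_integral μ hμ0 (fun x => x) measurable_id.aestronglyMeasurable, hEX]
  have hQYtot : ∫ u in Ioo (0:ℝ) 1, QY u = ∫ ω, Y ω ∂P := by
    rw [hQYq, quantAux_integral ν hν0 (fun x => x) measurable_id.aestronglyMeasurable, hEY]
  have hQYmono : MonotoneOn QY (Ioo (0:ℝ) 1) := by
    rw [hQYq]; exact quantAux_monoOn ν hν0
  -- main argument
  intro p hp
  set t := QY p with ht
  set φ : ℝ → ℝ := fun x => max (x - t) 0 with hφ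
  have hφc : Continuous φ := (continuous_id.sub continuous_const).max continuous_const
  have hφconv : ConvexOn ℝ Set.univ φ := by
    have h1 : ConvexOn ℝ Set.univ (fun x : ℝ => x - t) := by
      simpa [sub_eq_add_neg, Pi.add_def] using (convexOn_id convex_univ).add_const (-t)
    have h2 := h1.sup (convexOn_const (0:ℝ) convex_univ)
    simpa [Pi.sup_def, hφ] using h2
  have hφXint : Integrable (fun ω => φ (X ω)) P := (hXint.sub (integrable_const t)).pos_part
  have hφYint : Integrable (fun ω => φ (Y ω)) P := (hYint.sub (integrable_const t)).pos_part
  have hcxt : ∫ ω, φ (X ω) ∂P ≤ ∫ ω, φ (Y ω) ∂P := hcx φ hφconv hφXint hφYint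
  have hφμint : Integrable φ μ := by
    rw [hμdef]
    exact (integrable_map_measure hφc.aestronglyMeasurable hX'm.aemeasurable).mpr
      ((hXint'.sub (integrable_const t)).pos_part)
  have hφνint : Integrable φ ν := by
    rw [hνdef]
    exact (integrable_map_measure hφc.aestronglyMeasurable hY'm.aemeasurable).mpr
      ((hYint'.sub (integrable_const t)).pos_part)
  have hIφQX : IntegrableOn (fun u => φ (QX u)) (Ioo (0:ℝ) 1) volume := by
    rw [hQXq]; exact quantAux_integrable μ hμ0 φ hφμint
  have hIφQY : IntegrableOn (fun u => φ (QY u)) (Ioo (0:ℝ) 1) volume := by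
    rw [hQYq]; exact quantAux_integrable ν hν0 φ hφνint
  have hφQXtot : ∫ u in Ioo (0:ℝ) 1, φ (QX u) = ∫ ω, φ (X ω) ∂P := by
    rw [hQXq, quantAux_integral μ hμ0 φ hφc.aestronglyMeasurable, hμdef,
      integral_map hX'm.aemeasurable hφc.aestronglyMeasurable]
    exact (integral_congr_ae (hX'e.mono fun ω h => by rw [h])).symm
  have hφQYtot : ∫ u in Ioo (0:ℝ) 1, φ (QY u) = ∫ ω, φ (Y ω) ∂P := by
    rw [hQYq, quantAux_integral ν hν0 φ hφc.aestronglyMeasurable, hνdef,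
      integral_map hY'm.aemeasurable hφc.aestronglyMeasurable]
    exact (integral_congr_ae (hY'e.mono fun ω h => by rw [h])).symm
  -- splitting (0,1) at p
  have hsub1 : Ioc (0:ℝ) p ⊆ Ioo 0 1 := fun u hu => ⟨hu.1, lt_of_le_of_lt hu.2 hp.2⟩
  have hsub2 : Ioo p 1 ⊆ Ioo (0:ℝ) 1 := fun u hu => ⟨hp.1.trans hu.1, hu.2⟩
  have hsplit : Ioo (0:ℝ) 1 = Ioc 0 p ∪ Ioo p 1 := (Ioc_union_Ioo_eq_Ioo hp.1.le hp.2).symm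
  have hdisj : Disjoint (Ioc (0:ℝ) p) (Ioo p 1) := by
    rw [disjoint_left]
    rintro u ⟨_, h1⟩ ⟨h2, _⟩
    exact absurd h1 (not_le.2 h2)
  have hvol : (volume (Ioo p 1)).toReal = 1 - p := by
    rw [Real.volume_Ioo, ENNReal.toReal_ofReal (by linarith [hp.2])]
  -- E[(Y - t)+] identity
  have hzeroY : ∫ u in Ioc (0:ℝ) p, φ (QY u) = 0 := by
    rw [setIntegral_congr_fun measurableSet_Ioc (g := fun _ => (0:ℝ)) ?_]
    · simp
    · intro u hu
      have h1 : QY u ≤ t := hQYmono (hsub1 hu) hp hu.2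
      show max (QY u - t) 0 = 0
      exact max_eq_right (sub_nonpos.2 h1)
  have heqY : ∫ u in Ioo p 1, φ (QY u) = ∫ u in Ioo p 1, (QY u - t) := by
    refine setIntegral_congr_fun measurableSet_Ioo fun u hu => ?_
    have h1 : t ≤ QY u := hQYmono hp (hsub2 hu) hu.1.le
    show max (QY u - t) 0 = QY u - t
    exact max_eq_left (sub_nonneg.2 h1)
  have hsumY : ∫ u in Ioo (0:ℝ) 1, φ (QY u)
      = (∫ u in Ioc (0:ℝ) p, φ (QY u)) + ∫ u in Ioo p 1, φ (QY u) := by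
    rw [hsplit]
    exact setIntegral_union hdisj measurableSet_Ioo (hIφQY.mono_set hsub1)
      (hIφQY.mono_set hsub2)
  have hconst : IntegrableOn (fun _ : ℝ => t) (Ioo p 1) volume :=
    integrableOn_const (by rw [Real.volume_Ioo]; exact ENNReal.ofReal_ne_top)
  have hsubY : ∫ u in Ioo p 1, (QY u - t)
      = (∫ u in Ioo p 1, QY u) - (1 - p) * t := by
    rw [integral_sub (hIQY.mono_set hsub2) hconst, setIntegral_const, measureReal_def, hvol, smul_eq_mul]
  -- X side inequality
  have hineqX1 : ∫ u in Ioo p 1, (QX u - t) ≤ ∫ u in Ioo p 1, φ (QX u) := by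
    refine setIntegral_mono_on ((hIQX.mono_set hsub2).sub hconst) (hIφQX.mono_set hsub2)
      measurableSet_Ioo fun u _ => ?_
    exact le_max_left _ _
  have hineqX2 : ∫ u in Ioo p 1, φ (QX u) ≤ ∫ u in Ioo (0:ℝ) 1, φ (QX u) := by
    refine setIntegral_mono_set hIφQX ?_ (HasSubset.Subset.eventuallyLE hsub2)
    filter_upwards with u
    exact le_max_right _ _
  have hsubX : ∫ u in Ioo p 1, (QX u - t)
      = (∫ u in Ioo p 1, QX u) - (1 - p) * t := by
    rw [integral_sub (hIQX.mono_set hsub2) hconst, setIntegral_const, measureReal_def, hvol, smul_eq_mul]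
  -- key inequality on upper parts
  have hkey : ∫ u in Ioo p 1, QX u ≤ ∫ u in Ioo p 1, QY u := by
    have c1 : (∫ u in Ioo p 1, QX u) - (1 - p) * t ≤ ∫ ω, φ (X ω) ∂P := by
      rw [← hsubX, ← hφQXtot]; exact hineqX1.trans hineqX2
    have c2 : ∫ ω, φ (Y ω) ∂P = (∫ u in Ioo p 1, QY u) - (1 - p) * t := by
      rw [← hφQYtot, hsumY, hzeroY, zero_add, heqY, hsubY]
    linarith [hcxt]
  -- totals split
  have hsumQX : ∫ u in Ioo (0:ℝ) 1, QX u
      = (∫ u in Ioc (0:ℝ) p, QX u) + ∫ u in Ioo p 1, QX u := by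
    rw [hsplit]
    exact setIntegral_union hdisj measurableSet_Ioo (hIQX.mono_set hsub1) (hIQX.mono_set hsub2)
  have hsumQY : ∫ u in Ioo (0:ℝ) 1, QY u
      = (∫ u in Ioc (0:ℝ) p, QY u) + ∫ u in Ioo p 1, QY u := by
    rw [hsplit]
    exact setIntegral_union hdisj measurableSet_Ioo (hIQY.mono_set hsub1) (hIQY.mono_set hsub2)
  rw [intervalIntegral.integral_of_le hp.1.le, intervalIntegral.integral_of_le hp.1.le]
  have htot : ∫ u in Ioo (0:ℝ) 1, QX u = ∫ u in Ioo (0:ℝ) 1, QY u := by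
    rw [hQXtot, hQYtot, hmean]
  rw [hsumQX, hsumQY] at htot
  linarith
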